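/- Let R be a polynomial ring over an F-finite field K of characteristic p (or an F-finite regular local ring) with maximal (homogeneous) ideal m, and let {I_n} be a filtration of (homogeneous) ideals. Then {I_n} is an F-pure filtration if and only if the intersection over all n ≥ 0 of the colon ideals ((I_{n+1})^{[p]} : I_{np+1}) is not contained in m^{[p]}. -/

import Mathlib

set_option maxHeartbeats 1000000
set_option synthInstance.maxHeartbeats 400000

noncomputable section

section Core
variable {R : Type*} [CommRing R]

/-- A Frobenius splitting: identifying `R^{1/p}` with `R` via `p`-th roots, an additive map
`φ : R^{1/p} → R` which is `R`-linear (`φ(a^p b^{1/p}) = a φ(b^{1/p})`) and splits the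
inclusion `R ⊆ R^{1/p}` (equivalently `φ 1 = 1`). -/
def IsFrobeniusSplitting (p : ℕ) (φ : R → R) : Prop :=
  (∀ a b : R, φ (a + b) = φ a + φ b) ∧ (∀ a b : R, φ (a ^ p * b) = a * φ b) ∧ φ 1 = 1

/-- A ring is `F`-split (`F`-pure in the `F`-finite case) if Frobenius splits. -/
def IsFSplitRing (p : ℕ) (A : Type*) [CommRing A] : Prop :=
  ∃ φ : A → A, IsFrobeniusSplitting p φ

/-- `A` is `F`-finite: `A` is a finitely generated module over its subring of `p`-th powers. -/
def IsFFiniteRing (p : ℕ) (A : Type*) [CommRing A] : Prop :=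
  ∃ (n : ℕ) (g : Fin n → A), ∀ x : A, ∃ c : Fin n → A, x = ∑ i, c i ^ p * g i

/-- A filtration of ideals. -/
def IsIdealFiltration (I : ℕ → Ideal R) : Prop :=
  I 0 = ⊤ ∧ (∀ n, I (n + 1) ≤ I n) ∧ ∀ m n, I m * I n ≤ I (m + n)

/-- An `F`-pure filtration. -/
def IsFPureFiltration (p : ℕ) (I : ℕ → Ideal R) : Prop :=
  IsIdealFiltration I ∧ ∃ φ : R → R, IsFrobeniusSplitting p φ ∧
    ∀ n : ℕ, ∀ x ∈ I (n * p + 1), φ x ∈ I (n + 1)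

/-- The Frobenius power `J^{[p]}` of an ideal. -/
def Ideal.frobPow (p : ℕ) (J : Ideal R) : Ideal R :=
  Ideal.span ((fun a => a ^ p) '' (J : Set R))

/-- The `n`-th symbolic power `I^{(n)}`. -/
def Ideal.symbPow (I : Ideal R) (n : ℕ) : Ideal R where
  carrier := {r : R | ∃ s : R, (∀ P ∈ I.minimalPrimes, s ∉ P) ∧ s * r ∈ I ^ n}
  zero_mem' :=
    ⟨1, fun P hP h1 => hP.1.1.ne_top ((Ideal.eq_top_iff_one P).mpr h1), by simp⟩
  add_mem' := by
    rintro a b ⟨s, hs, hsa⟩ ⟨t, ht, htb⟩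
    refine ⟨s * t, fun P hP hst => ((hP.1.1.mem_or_mem hst).elim (hs P hP) (ht P hP)), ?_⟩
    have h1 : (s * t) * (a + b) = t * (s * a) + s * (t * b) := by ring
    rw [h1]
    exact (I ^ n).add_mem (Ideal.mul_mem_left _ _ hsa) (Ideal.mul_mem_left _ _ htb)
  smul_mem' := by
    rintro c x ⟨s, hs, hsx⟩
    refine ⟨s, hs, ?_⟩
    have h1 : s * (c • x) = c * (s * x) := by
      simp only [smul_eq_mul]; ring
    rw [h1]
    exact Ideal.mul_mem_left _ _ hsx

end Core



set_option linter.unusedSectionVars false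

structure PRootData (p : ℕ) (K : Type*) [Field K] where
  m : ℕ
  θ : Fin m → K
  u : Fin m → K
  lam : K → K
  lam_add : ∀ a b : K, lam (a + b) = lam a + lam b
  lam_semi : ∀ a x : K, lam (a ^ p * x) = a * lam x
  dual : ∀ i j, lam (u i * θ j) = if i = j then 1 else 0
  expand : ∀ x : K, x = ∑ i, lam (u i * x) ^ p * θ i
  i₀ : Fin m

namespace PRootData

open MvPolynomial

variable {p : ℕ} {K : Type*} [Field K] [Fact p.Prime] [CharP K p]
  (D : PRootData p K) {d : ℕ}

lemma lam_zero : D.lam 0 = 0 := by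
  have h := D.lam_add 0 0
  rw [add_zero] at h
  exact (left_eq_add.mp h)

lemma u_i0_ne : D.u D.i₀ ≠ 0 := by
  intro h
  have := D.dual D.i₀ D.i₀
  rw [h, zero_mul, D.lam_zero, if_pos rfl] at this
  exact zero_ne_one this

section Poly

local notation "R" => MvPolynomial (Fin d) K

lemma ppos : 0 < p := (Fact.out : p.Prime).pos

variable (p) in
/-- exponent vector from a function to `Fin p`. -/
def expo (α : Fin d → Fin p) : Fin d →₀ ℕ :=
  Finsupp.equivFunOnFinite.symm (fun k => (α k : ℕ))

variable (p) in
def qmap (β : Fin d →₀ ℕ) : Fin d →₀ ℕ :=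
  Finsupp.equivFunOnFinite.symm (fun k => β k / p)

variable (p) in
def rmap (β : Fin d →₀ ℕ) : Fin d → Fin p :=
  fun k => ⟨β k % p, Nat.mod_lt _ ppos⟩

@[simp] lemma expo_apply (α : Fin d → Fin p) (k : Fin d) : expo p α k = (α k : ℕ) := rfl
@[simp] lemma qmap_apply (β : Fin d →₀ ℕ) (k : Fin d) : qmap p β k = β k / p := rfl
@[simp] lemma rmap_apply (β : Fin d →₀ ℕ) (k : Fin d) : (rmap p β k : ℕ) = β k % p := rfl

lemma smul_apply' (γ : Fin d →₀ ℕ) (k : Fin d) : (p • γ) k = p * γ k := by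
  simp

lemma rmap_smul_add (γ : Fin d →₀ ℕ) (α : Fin d → Fin p) :
    rmap p (p • γ + expo p α) = α := by
  funext k
  apply Fin.ext
  rw [rmap_apply]
  simp only [Finsupp.add_apply, smul_apply', expo_apply]
  rw [Nat.mul_add_mod]
  exact Nat.mod_eq_of_lt (α k).isLt

lemma qmap_smul_add (γ : Fin d →₀ ℕ) (α : Fin d → Fin p) :
    qmap p (p • γ + expo p α) = γ := by
  ext k
  rw [qmap_apply]
  simp only [Finsupp.add_apply, smul_apply', expo_apply]
  rw [Nat.mul_add_div ppos, Nat.div_eq_of_lt (α k).isLt, add_zero]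

lemma recompose (β : Fin d →₀ ℕ) : p • qmap p β + expo p (rmap p β) = β := by
  ext k
  simp only [Finsupp.add_apply, smul_apply', qmap_apply, expo_apply, rmap_apply]
  exact Nat.div_add_mod _ _

/-- coefficient maps for the expansion of `R` over `R^p`. -/
def Cc (i : Fin D.m) (α : Fin d → Fin p) (f : R) : R :=
  ∑ β ∈ f.support,
    if rmap p β = α then monomial (qmap p β) (D.lam (D.u i * coeff β f)) else 0

lemma Cc_zero (i : Fin D.m) (α : Fin d → Fin p) : D.Cc i α (0 : R) = 0 := by
  simp [Cc]

lemma Cc_sum_subset (i : Fin D.m) (α : Fin d → Fin p) (f : R) (S : Finset (Fin d →₀ ℕ))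
    (hS : f.support ⊆ S) :
    D.Cc i α f = ∑ β ∈ S,
      if rmap p β = α then monomial (qmap p β) (D.lam (D.u i * coeff β f)) else 0 := by
  refine Finset.sum_subset hS fun β _ hβ => ?_
  rw [MvPolynomial.notMem_support_iff] at hβ
  rw [hβ, mul_zero, D.lam_zero]
  simp

lemma Cc_add (i : Fin D.m) (α : Fin d → Fin p) (f g : R) :
    D.Cc i α (f + g) = D.Cc i α f + D.Cc i α g := by
  classical
  set S := f.support ∪ g.support ∪ (f + g).support with hSdef
  rw [D.Cc_sum_subset i α (f+g) S (by intro x hx; simp [hSdef, hx]),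
    D.Cc_sum_subset i α f S (by intro x hx; simp [hSdef, hx]),
    D.Cc_sum_subset i α g S (by intro x hx; simp [hSdef, hx]),
    ← Finset.sum_add_distrib]
  refine Finset.sum_congr rfl fun β _ => ?_
  rw [coeff_add, mul_add, D.lam_add]
  split_ifs with h
  · rw [← map_add]
  · rw [add_zero]

/-- `Cc` bundled as an additive map. -/
def CcHom (i : Fin D.m) (α : Fin d → Fin p) : MvPolynomial (Fin d) K →+ MvPolynomial (Fin d) K :=
  AddMonoidHom.mk' (D.Cc i α) (D.Cc_add i α)

lemma Cc_monomial (i : Fin D.m) (α : Fin d → Fin p) (β : Fin d →₀ ℕ) (a : K) :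
    D.Cc i α (monomial β a)
      = if rmap p β = α then monomial (qmap p β) (D.lam (D.u i * a)) else 0 := by
  classical
  by_cases ha : a = 0
  · subst ha
    rw [map_zero, D.Cc_zero, mul_zero, D.lam_zero]
    simp
  · rw [Cc, support_monomial, if_neg ha, Finset.sum_singleton, coeff_monomial, if_pos rfl]

lemma Cc_semi (i : Fin D.m) (α : Fin d → Fin p) (g f : R) :
    D.Cc i α (g ^ p * f) = g * D.Cc i α f := by
  classical
  induction g using MvPolynomial.induction_on' with
  | add g₁ g₂ h1 h2 =>
    rw [add_pow_char, add_mul, D.Cc_add, h1, h2, add_mul]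
  | monomial δ c =>
    induction f using MvPolynomial.induction_on' with
    | add f₁ f₂ hf1 hf2 =>
      rw [mul_add, D.Cc_add, hf1, hf2, D.Cc_add, mul_add]
    | monomial β a =>
      rw [monomial_pow, monomial_mul, D.Cc_monomial, D.Cc_monomial]
      have hr : rmap p (p • δ + β) = rmap p β := by
        funext k
        apply Fin.ext
        simp only [rmap_apply, Finsupp.add_apply, smul_apply']
        rw [Nat.mul_add_mod]
      have hq : qmap p (p • δ + β) = δ + qmap p β := by
        ext k
        simp only [qmap_apply, Finsupp.add_apply, smul_apply']
        rw [Nat.mul_add_div ppos]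
      rw [hr, hq]
      split_ifs with h
      · rw [show D.u i * (c ^ p * a) = c ^ p * (D.u i * a) by ring, D.lam_semi,
          ← monomial_mul]
      · rw [mul_zero]

/-- the expansion of `f` in terms of `p`-th powers: basis elements. -/
def eb (i : Fin D.m) (α : Fin d → Fin p) : R := monomial (expo p α) (D.θ i)

lemma expand_poly (f : R) :
    ∑ b : Fin D.m × (Fin d → Fin p), (D.Cc b.1 b.2 f) ^ p * D.eb b.1 b.2 = f := by
  classical
  induction f using MvPolynomial.induction_on' with
  | add f₁ f₂ h1 h2 =>
    conv_rhs => rw [← h1, ← h2]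
    rw [← Finset.sum_add_distrib]
    refine Finset.sum_congr rfl fun b _ => ?_
    rw [D.Cc_add, add_pow_char, add_mul]
  | monomial β a =>
    rw [Fintype.sum_prod_type]
    have hinner : ∀ i : Fin D.m,
        (∑ α : Fin d → Fin p, (D.Cc i α (monomial β a)) ^ p * D.eb i α)
          = monomial β (D.lam (D.u i * a) ^ p * D.θ i) := by
      intro i
      rw [Finset.sum_eq_single (rmap p β)]
      · rw [D.Cc_monomial, if_pos rfl, eb, monomial_pow, monomial_mul, recompose β]
      · intro α _ hα
        rw [D.Cc_monomial, if_neg (fun h => hα h.symm), zero_pow (Fact.out : p.Prime).ne_zero,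
          zero_mul]
      · intro h
        exact absurd (Finset.mem_univ _) h
    rw [Finset.sum_congr rfl fun i _ => hinner i]
    exact congrArg (monomial β) (D.expand a).symm ▸ by rw [← map_sum (monomial β), ← D.expand a]


lemma coeff_Cc (i : Fin D.m) (α : Fin d → Fin p) (f : R) (γ : Fin d →₀ ℕ) :
    coeff γ (D.Cc i α f) = D.lam (D.u i * coeff (p • γ + expo p α) f) := by
  classical
  rw [Cc, coeff_sum]
  have step : ∀ β ∈ f.support,
      coeff γ (if rmap p β = α then monomial (qmap p β) (D.lam (D.u i * coeff β f)) else 0)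
        = if β = p • γ + expo p α then D.lam (D.u i * coeff β f) else 0 := by
    intro β _
    by_cases hb : rmap p β = α
    · rw [if_pos hb, coeff_monomial]
      by_cases hq : qmap p β = γ
      · have hβ : β = p • γ + expo p α := by
          conv_lhs => rw [← recompose (p := p) β]
          rw [hq, hb]
        rw [if_pos hq, if_pos hβ]
      · have hne : β ≠ p • γ + expo p α := by
          intro h; apply hq; rw [h, qmap_smul_add]
        rw [if_neg hq, if_neg hne]
    · have hne : β ≠ p • γ + expo p α := by
        intro h; apply hb; rw [h, rmap_smul_add]
      rw [if_neg hb, if_neg hne, coeff_zero]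
  rw [Finset.sum_congr rfl step, Finset.sum_ite_eq' f.support (p • γ + expo p α)
    (fun β => D.lam (D.u i * coeff β f))]
  split_ifs with h
  · rfl
  · rw [MvPolynomial.notMem_support_iff.mp h, mul_zero, D.lam_zero]

section Mult

variable (p) in
def tauexp (α : Fin d → Fin p) : Fin d →₀ ℕ :=
  Finsupp.equivFunOnFinite.symm (fun k => p - 1 - (α k : ℕ))

@[simp] lemma tauexp_apply (α : Fin d → Fin p) (k : Fin d) :
    tauexp p α k = p - 1 - (α k : ℕ) := rfl

variable (p) in
def omeg : Fin d → Fin p := fun _ => ⟨p - 1, by have := ppos (p := p); omega⟩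

/-- the multiplier monomials. -/
def mult (i : Fin D.m) (α : Fin d → Fin p) : R :=
  monomial (tauexp p α) (D.u i * (D.u D.i₀)⁻¹)

/-- the generating "trace" map. -/
def Lam (f : R) : R := D.Cc D.i₀ (omeg p) f

lemma Lam_def (f : R) : D.Lam f = D.Cc D.i₀ (omeg p) f := rfl

lemma modaux (a b' : ℕ) (ha : a < p) (hb : b' < p) :
    ((p - 1 - a) + b') % p = p - 1 ↔ b' = a := by
  have h0 : 0 < p := ppos
  constructor
  · intro h
    rcases Nat.lt_or_ge (p - 1 - a + b') p with hlt | hge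
    · rw [Nat.mod_eq_of_lt hlt] at h; omega
    · rw [Nat.mod_eq_sub_mod hge, Nat.mod_eq_of_lt (by omega)] at h; omega
  · intro h; subst h
    have h2 : p - 1 - b' + b' = p - 1 := by omega
    rw [h2, Nat.mod_eq_of_lt (by omega)]

lemma modaux' (a b : ℕ) (ha : a < p) :
    ((p - 1 - a) + b) % p = p - 1 ↔ b % p = a := by
  have h0 : 0 < p := ppos
  rw [Nat.add_mod, Nat.mod_eq_of_lt (show p - 1 - a < p by omega)]
  exact modaux _ _ ha (Nat.mod_lt _ h0)

lemma divaux (a b : ℕ) (ha : a < p) (h : b % p = a) : ((p - 1 - a) + b) / p = b / p := by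
  have h0 : 0 < p := ppos
  have hd := Nat.div_add_mod b p
  have h2 : p - 1 - a + b = p * (b / p) + (p - 1) := by omega
  rw [h2, Nat.mul_add_div h0, Nat.div_eq_of_lt (show p - 1 < p by omega), add_zero]

lemma Cc_eq_Lam (i : Fin D.m) (α : Fin d → Fin p) (f : R) :
    D.Cc i α f = D.Lam (D.mult i α * f) := by
  classical
  induction f using MvPolynomial.induction_on' with
  | add f₁ f₂ h1 h2 =>
    rw [mul_add, D.Cc_add, h1, h2, D.Lam_def, D.Lam_def, D.Lam_def, D.Cc_add]
  | monomial β a =>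
    rw [mult, monomial_mul, D.Lam_def, D.Cc_monomial, D.Cc_monomial]
    have hcond : (rmap p (tauexp p α + β) = omeg p) ↔ (rmap p β = α) := by
      rw [funext_iff, funext_iff]
      apply forall_congr'
      intro k
      rw [Fin.ext_iff, Fin.ext_iff]
      simp only [rmap_apply, Finsupp.add_apply, tauexp_apply]
      show ((p - 1 - (α k : ℕ)) + β k) % p = p - 1 ↔ β k % p = (α k : ℕ)
      exact modaux' _ _ (α k).isLt
    by_cases h : rmap p β = α
    · rw [if_pos h, if_pos (hcond.mpr h)]
      have hq : qmap p (tauexp p α + β) = qmap p β := by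
        ext k
        simp only [qmap_apply, Finsupp.add_apply, tauexp_apply]
        refine divaux _ _ (α k).isLt ?_
        have := congrFun h k
        rw [Fin.ext_iff] at this
        simpa using this
      rw [hq]
      congr 1
      have hu : D.u D.i₀ ≠ 0 := D.u_i0_ne
      field_simp
    · rw [if_neg h, if_neg (fun hc => h (hcond.mp hc))]


lemma Lam_add (f g : R) : D.Lam (f + g) = D.Lam f + D.Lam g := D.Cc_add _ _ f g

lemma Lam_semi (g f : R) : D.Lam (g ^ p * f) = g * D.Lam f := D.Cc_semi _ _ g f

end Mult

section Membership

lemma mem_frobPow_of_forall (J : Ideal R) (f : R)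
    (h : ∀ (i : Fin D.m) (α : Fin d → Fin p), D.Cc i α f ∈ J) : f ∈ J.frobPow p := by
  rw [← D.expand_poly f]
  exact Ideal.sum_mem _ fun b _ => Ideal.mul_mem_right _ _
    (Ideal.subset_span ⟨_, h b.1 b.2, rfl⟩)

lemma Cc_mem_of_mem_frobPow (J : Ideal R) (f : R) (hf : f ∈ J.frobPow p) :
    ∀ (i : Fin D.m) (α : Fin d → Fin p), D.Cc i α f ∈ J := by
  refine Submodule.span_induction ?_ ?_ ?_ ?_ hf
  · rintro x ⟨y, hy, rfl⟩ i α
    show D.Cc i α (y ^ p) ∈ J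
    rw [show y ^ p = y ^ p * 1 from (mul_one _).symm, D.Cc_semi]
    exact Ideal.mul_mem_right _ _ hy
  · intro i α
    rw [D.Cc_zero]
    exact Submodule.zero_mem J
  · intro x y _ _ hx hy i α
    rw [D.Cc_add]
    exact Submodule.add_mem J (hx i α) (hy i α)
  · intro r x _ hx i α
    rw [smul_eq_mul]
    have hexp : r * x = ∑ b : Fin D.m × (Fin d → Fin p),
        (D.Cc b.1 b.2 x) ^ p * (r * D.eb b.1 b.2) := by
      conv_lhs => rw [← D.expand_poly x]
      rw [Finset.mul_sum]
      exact Finset.sum_congr rfl fun b _ => by ring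
    rw [hexp]
    rw [show D.Cc i α (∑ b : Fin D.m × (Fin d → Fin p),
        (D.Cc b.1 b.2 x) ^ p * (r * D.eb b.1 b.2))
      = ∑ b : Fin D.m × (Fin d → Fin p),
        D.Cc i α ((D.Cc b.1 b.2 x) ^ p * (r * D.eb b.1 b.2)) from
      map_sum (D.CcHom i α) _ _]
    refine Ideal.sum_mem _ fun b _ => ?_
    rw [D.Cc_semi]
    exact Ideal.mul_mem_right _ _ (hx b.1 b.2)

lemma Lam_mul_mem (J : Ideal R) (z w : R) (hw : w ∈ J.frobPow p) :
    D.Lam (z * w) ∈ J := by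
  have hexp : z * w = ∑ b : Fin D.m × (Fin d → Fin p),
      (D.Cc b.1 b.2 w) ^ p * (z * D.eb b.1 b.2) := by
    conv_lhs => rw [← D.expand_poly w]
    rw [Finset.mul_sum]
    exact Finset.sum_congr rfl fun b _ => by ring
  rw [hexp]
  rw [show D.Lam (∑ b : Fin D.m × (Fin d → Fin p),
      (D.Cc b.1 b.2 w) ^ p * (z * D.eb b.1 b.2))
    = ∑ b : Fin D.m × (Fin d → Fin p),
      D.Lam ((D.Cc b.1 b.2 w) ^ p * (z * D.eb b.1 b.2)) from
    map_sum (AddMonoidHom.mk' D.Lam D.Lam_add) _ _]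
  refine Ideal.sum_mem _ fun b _ => ?_
  rw [D.Lam_semi]
  exact Ideal.mul_mem_right _ _ (D.Cc_mem_of_mem_frobPow J w hw b.1 b.2)

end Membership
end Poly
end PRootData

section SpanX

open MvPolynomial

variable {K : Type*} [Field K] {d : ℕ}

lemma one_not_mem_spanX : (1 : MvPolynomial (Fin d) K) ∉ Ideal.span (Set.range X) := by
  intro h
  have hle : Ideal.span (Set.range (X : Fin d → MvPolynomial (Fin d) K))
      ≤ RingHom.ker (eval (fun _ => (0 : K))) := by
    rw [Ideal.span_le]
    rintro _ ⟨i, rfl⟩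
    simp [RingHom.mem_ker]
  have := hle h
  rw [RingHom.mem_ker, map_one] at this
  exact one_ne_zero this

lemma mem_spanX_of_coeff_zero (f : MvPolynomial (Fin d) K) (h : coeff 0 f = 0) :
    f ∈ Ideal.span (Set.range X) := by
  classical
  rw [as_sum f]
  refine Ideal.sum_mem _ fun β hβ => ?_
  have hβ0 : β ≠ 0 := by
    rintro rfl
    exact (mem_support_iff.mp hβ) h
  obtain ⟨k, hk⟩ : ∃ k, β k ≠ 0 := by
    by_contra hall
    push_neg at hall
    exact hβ0 (Finsupp.ext hall)
  have hsplit : β = Finsupp.single k 1 + (β - Finsupp.single k 1) := by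
    ext j
    simp only [Finsupp.add_apply, Finsupp.single_apply, Finsupp.tsub_apply]
    by_cases hj : k = j
    · subst hj; simp; omega
    · simp [hj]
  rw [hsplit, monomial_single_add, pow_one]
  exact Ideal.mul_mem_right _ _ (Ideal.subset_span ⟨k, rfl⟩)

end SpanX

section Homog

open MvPolynomial

variable {K : Type*} [Field K] {d : ℕ}

/-- componentwise-homogeneous ideal -/
def Hg (J : Ideal (MvPolynomial (Fin d) K)) : Prop :=
  ∀ f ∈ J, ∀ k, homogeneousComponent k f ∈ J

lemma degree_eq_of_homog {f : MvPolynomial (Fin d) K} {e : ℕ} (hf : f.IsHomogeneous e)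
    {δ : Fin d →₀ ℕ} (hδ : coeff δ f ≠ 0) : δ.degree = e := by
  have := hf hδ
  rw [Finsupp.degree_eq_weight_one]
  exact this

lemma comp_mul_homog (f g : MvPolynomial (Fin d) K) (n e : ℕ) (hg : g.IsHomogeneous e) :
    homogeneousComponent (n + e) (f * g) = homogeneousComponent n f * g := by
  classical
  apply MvPolynomial.ext
  intro δ
  rw [coeff_homogeneousComponent, coeff_mul, coeff_mul]
  by_cases hδ : δ.degree = n + e
  · rw [if_pos hδ]
    refine Finset.sum_congr rfl fun xy hxy => ?_
    rw [coeff_homogeneousComponent]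
    by_cases hyg : coeff xy.2 g = 0
    · rw [hyg, mul_zero, mul_zero]
    · have hye : (xy.2).degree = e := degree_eq_of_homog hg hyg
      have hsum : (xy.1).degree + (xy.2).degree = δ.degree := by
        rw [← Finset.HasAntidiagonal.mem_antidiagonal.mp hxy]
        simp [Finsupp.degree_eq_weight_one]
      rw [if_pos (by omega)]
  · rw [if_neg hδ]
    symm
    refine Finset.sum_eq_zero fun xy hxy => ?_
    rw [coeff_homogeneousComponent]
    by_cases hyg : coeff xy.2 g = 0
    · rw [hyg, mul_zero]
    · have hye : (xy.2).degree = e := degree_eq_of_homog hg hyg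
      have hsum : (xy.1).degree + (xy.2).degree = δ.degree := by
        rw [← Finset.HasAntidiagonal.mem_antidiagonal.mp hxy]
        simp [Finsupp.degree_eq_weight_one]
      rw [if_neg (by omega), zero_mul]

lemma comp_mul_homog_zero (f g : MvPolynomial (Fin d) K) (k e : ℕ) (hg : g.IsHomogeneous e)
    (hk : k < e) : homogeneousComponent k (f * g) = 0 := by
  classical
  apply MvPolynomial.ext
  intro δ
  rw [coeff_homogeneousComponent, coeff_zero, coeff_mul]
  by_cases hδ : δ.degree = k
  · rw [if_pos hδ]
    refine Finset.sum_eq_zero fun xy hxy => ?_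
    by_cases hyg : coeff xy.2 g = 0
    · rw [hyg, mul_zero]
    · have hye : (xy.2).degree = e := degree_eq_of_homog hg hyg
      have hsum : (xy.1).degree + (xy.2).degree = δ.degree := by
        rw [← Finset.HasAntidiagonal.mem_antidiagonal.mp hxy]
        simp [Finsupp.degree_eq_weight_one]
      omega
  · rw [if_neg hδ]

lemma Hg_span (S : Set (MvPolynomial (Fin d) K))
    (hS : ∀ g ∈ S, ∃ k, g.IsHomogeneous k) : Hg (Ideal.span S) := by
  classical
  intro f hf k
  obtain ⟨c, hsupp, hsum⟩ := Submodule.mem_span_set.mp hf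
  have hrfl : (c.sum fun mi r => r • mi) = ∑ g ∈ c.support, c g • g := rfl
  rw [← hsum, hrfl, map_sum (homogeneousComponent k) (fun g => c g • g) c.support]
  refine Ideal.sum_mem _ fun g hg => ?_
  obtain ⟨e, he⟩ := hS g (hsupp hg)
  rw [smul_eq_mul]
  by_cases hek : e ≤ k
  · rw [show k = (k - e) + e by omega, comp_mul_homog _ _ _ _ he]
    exact Ideal.mul_mem_left _ _ (Ideal.subset_span (hsupp hg))
  · rw [comp_mul_homog_zero _ _ _ _ he (by omega)]
    exact Submodule.zero_mem _

lemma Hg_colon (A B : Ideal (MvPolynomial (Fin d) K)) (hA : Hg A)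
    (T : Set (MvPolynomial (Fin d) K)) (hT : ∀ g ∈ T, ∃ k, g.IsHomogeneous k)
    (hB : B = Ideal.span T) : Hg (A.colon B) := by
  intro r hr k
  rw [Submodule.mem_colon] at hr ⊢
  intro x hx
  subst hB
  refine Submodule.span_induction ?_ ?_ ?_ ?_ hx
  · intro g hg
    obtain ⟨e, he⟩ := hT g hg
    rw [smul_eq_mul, ← comp_mul_homog _ _ _ _ he]
    exact hA _ (hr g (Ideal.subset_span hg)) _
  · rw [smul_eq_mul, mul_zero]
    exact Submodule.zero_mem A
  · intro a b _ _ ha hb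
    rw [smul_eq_mul, mul_add]
    exact Submodule.add_mem A ha hb
  · intro a y _ hy
    rw [smul_eq_mul, smul_eq_mul, show homogeneousComponent k r * (a * y)
      = a * (homogeneousComponent k r * y) by ring]
    exact Ideal.mul_mem_left _ _ hy

lemma frobPow_span (p : ℕ) [Fact p.Prime] [CharP K p] (S : Set (MvPolynomial (Fin d) K)) :
    (Ideal.span S).frobPow p = Ideal.span ((fun a => a ^ p) '' S) := by
  classical
  apply le_antisymm
  · rw [Ideal.frobPow, Ideal.span_le]
    rintro _ ⟨y, hy, rfl⟩
    obtain ⟨c, hsupp, hsum⟩ := Submodule.mem_span_set.mp hy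
    have hrfl : (c.sum fun mi r => r • mi) = ∑ g ∈ c.support, c g • g := rfl
    have hmem : y ^ p ∈ Ideal.span ((fun a => a ^ p) '' S) := by
      rw [← hsum, hrfl, sum_pow_char]
      refine Ideal.sum_mem _ fun g hg => ?_
      rw [smul_eq_mul, mul_pow]
      exact Ideal.mul_mem_left _ _ (Ideal.subset_span ⟨g, hsupp hg, rfl⟩)
    exact hmem
  · rw [Ideal.span_le]
    rintro _ ⟨y, hy, rfl⟩
    exact Ideal.subset_span ⟨y, Ideal.subset_span hy, rfl⟩

lemma Hg_frobPow (p : ℕ) [Fact p.Prime] [CharP K p] (S : Set (MvPolynomial (Fin d) K))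
    (hS : ∀ g ∈ S, ∃ k, g.IsHomogeneous k) : Hg ((Ideal.span S).frobPow p) := by
  rw [frobPow_span]
  refine Hg_span _ ?_
  rintro _ ⟨g, hg, rfl⟩
  obtain ⟨k, hk⟩ := hS g hg
  exact ⟨k * p, hk.pow p⟩

lemma Hg_inf (J : ℕ → Ideal (MvPolynomial (Fin d) K)) (hJ : ∀ n, Hg (J n)) :
    Hg (⨅ n, J n) := by
  intro f hf k
  rw [Ideal.mem_iInf] at hf ⊢
  exact fun n => hJ n f (hf n) k

end Homog

section CcHomog

open MvPolynomial

variable {p : ℕ} {K : Type*} [Field K] [Fact p.Prime] [CharP K p]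
  (D : PRootData p K) {d : ℕ}

lemma Cc_isHomogeneous (i : Fin D.m) (α : Fin d → Fin p) (f : MvPolynomial (Fin d) K)
    (k : ℕ) (hf : f.IsHomogeneous k) : ∃ t, (D.Cc i α f).IsHomogeneous t := by
  by_cases h0 : D.Cc i α f = 0
  · exact ⟨0, by rw [h0]; exact isHomogeneous_zero _ _ _⟩
  · have hex : ∃ γ, coeff γ (D.Cc i α f) ≠ 0 := by
      by_contra hall
      push_neg at hall
      exact h0 (MvPolynomial.ext _ _ fun γ => by rw [hall, coeff_zero])
    obtain ⟨γ₀, hγ₀⟩ := hex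
    have key : ∀ γ : Fin d →₀ ℕ, coeff γ (D.Cc i α f) ≠ 0 →
        p * (Finsupp.weight (1 : Fin d → ℕ)) γ
          + (Finsupp.weight (1 : Fin d → ℕ)) (PRootData.expo p α) = k := by
      intro γ hγ
      rw [D.coeff_Cc] at hγ
      have hne : coeff (p • γ + PRootData.expo p α) f ≠ 0 := fun h => by
        rw [h, mul_zero, D.lam_zero] at hγ
        exact hγ rfl
      have hw := hf hne
      rw [map_add, map_nsmul, smul_eq_mul] at hw
      exact hw
    refine ⟨(Finsupp.weight (1 : Fin d → ℕ)) γ₀, fun γ hγ => ?_⟩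
    have h1 := key γ₀ hγ₀
    have h2 := key γ hγ
    have hp0 : 0 < p := (Fact.out : p.Prime).pos
    have h3 : p * (Finsupp.weight (1 : Fin d → ℕ)) γ
        = p * (Finsupp.weight (1 : Fin d → ℕ)) γ₀ := by omega
    exact Nat.eq_of_mul_eq_mul_left hp0 h3

end CcHomog

section HomogCst

open MvPolynomial

variable {K : Type*} [Field K] {d : ℕ}

lemma homog_zero_eq_C (f : MvPolynomial (Fin d) K) (h : f.IsHomogeneous 0) :
    f = C (coeff 0 f) := by
  classical
  apply MvPolynomial.ext
  intro γ
  rw [coeff_C]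
  by_cases hγ : (0 : Fin d →₀ ℕ) = γ
  · rw [if_pos hγ, ← hγ]
  · rw [if_neg hγ]
    by_contra h0
    have hw := h h0
    have : γ.degree = 0 := by rw [Finsupp.degree_eq_weight_one]; exact hw
    exact hγ ((Finsupp.degree_eq_zero_iff γ).mp this).symm

lemma homog_pos_coeff0 (f : MvPolynomial (Fin d) K) (t : ℕ) (h : f.IsHomogeneous t)
    (ht : 0 < t) : coeff 0 f = 0 := by
  by_contra h0
  have hw := h h0
  rw [map_zero] at hw
  omega

end HomogCst


namespace PRootDataAux

variable (p : ℕ) (K : Type*) [Field K] [Fact p.Prime] [CharP K p]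

def Tw (_p : ℕ) (K : Type*) := K

instance : AddCommGroup (Tw p K) := inferInstanceAs (AddCommGroup K)
instance : Module K (Tw p K) := Module.compHom K (frobenius K p)
instance : Nontrivial (Tw p K) := inferInstanceAs (Nontrivial K)

def tw : K → Tw p K := id
def untw : Tw p K → K := id

@[simp] lemma untw_tw (x : K) : untw p K (tw p K x) = x := rfl
@[simp] lemma tw_untw (x : Tw p K) : tw p K (untw p K x) = x := rfl
lemma tw_add (x y : K) : tw p K (x + y) = tw p K x + tw p K y := rfl
lemma untw_add (x y : Tw p K) : untw p K (x + y) = untw p K x + untw p K y := rfl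
lemma smul_def (a : K) (x : Tw p K) : a • x = tw p K (a ^ p * untw p K x) := rfl

theorem exists_pRootData (hFF : IsFFiniteRing p K) : Nonempty (PRootData p K) := by
  classical
  haveI : Module.Finite K (Tw p K) := by
    obtain ⟨n, g, hg⟩ := hFF
    refine ⟨⟨Finset.image (fun i => tw p K (g i)) Finset.univ, ?_⟩⟩
    rw [eq_top_iff]
    intro x _
    obtain ⟨c, hc⟩ := hg (untw p K x)
    have hx : x = ∑ i, c i • tw p K (g i) := by
      have : untw p K x = untw p K (∑ i, c i • tw p K (g i)) := by
        rw [hc]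
        have : untw p K (∑ i, c i • tw p K (g i)) = ∑ i, c i ^ p * g i := by
          rw [show (∑ i, c i • tw p K (g i)) = ∑ i, tw p K (c i ^ p * g i) from by
            refine Finset.sum_congr rfl fun i _ => ?_; rfl]
          induction (Finset.univ : Finset (Fin n)) using Finset.induction with
          | empty => simp; rfl
          | insert _ _ h ih => rw [Finset.sum_insert h, Finset.sum_insert h, untw_add, ih]; rfl
        rw [this]
      exact this
    rw [hx]
    exact Submodule.sum_mem _ fun i _ => Submodule.smul_mem _ _
      (Submodule.subset_span (Finset.mem_image.2 ⟨i, Finset.mem_univ i, rfl⟩))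
  haveI : Module.Free K (Tw p K) := Module.Free.of_divisionRing K (Tw p K)
  set V := Tw p K with hV
  let b : Module.Basis (Fin (Module.finrank K V)) K V := Module.finBasis K V
  have hpos : 0 < Module.finrank K V := Module.finrank_pos
  let i₀ : Fin (Module.finrank K V) := ⟨0, hpos⟩
  let lam0 : V →ₗ[K] K := b.coord i₀
  have hlam0 : lam0 (b i₀) = 1 := by simp [lam0]
  have key : ∀ (u : K) (a : K) (x : V),
      tw p K (u * untw p K (a • x)) = a • tw p K (u * untw p K x) := by
    intro u a x
    rw [smul_def, smul_def]
    show tw p K (u * (a ^ p * untw p K x)) = tw p K (a ^ p * (u * untw p K x))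
    ring_nf
  let B : LinearMap.BilinForm K V :=
    LinearMap.mk₂ K (fun u x => lam0 (tw p K (untw p K u * untw p K x)))
      (fun u v x => by
        beta_reduce
        rw [show tw p K (untw p K (u + v) * untw p K x)
            = tw p K (untw p K u * untw p K x) + tw p K (untw p K v * untw p K x) from by
          rw [untw_add, add_mul]; rfl]
        exact map_add _ _ _)
      (fun a u x => by
        beta_reduce
        have h1 : tw p K (untw p K (a • u) * untw p K x)
            = a • tw p K (untw p K u * untw p K x) := by
          rw [smul_def, smul_def]
          show tw p K ((a ^ p * untw p K u) * untw p K x)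
            = tw p K (a ^ p * (untw p K u * untw p K x))
          ring_nf
        rw [h1, map_smul])
      (fun u x y => by
        beta_reduce
        rw [show tw p K (untw p K u * untw p K (x + y))
            = tw p K (untw p K u * untw p K x) + tw p K (untw p K u * untw p K y) from by
          rw [untw_add, mul_add]; rfl]
        exact map_add _ _ _)
      (fun a u x => by
        beta_reduce
        rw [key, map_smul])
  have hBapp : ∀ (u x : K), B (tw p K u) (tw p K x) = lam0 (tw p K (u * x)) := fun u x => rfl
  have hB : B.Nondegenerate := LinearMap.BilinForm.Nondegenerate.ofSeparatingLeft <| by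
    intro u hu
    by_contra hne
    have hne' : untw p K u ≠ 0 := hne
    have hz : ∀ y : K, lam0 (tw p K y) = 0 := by
      intro y
      have := hu (tw p K ((untw p K u)⁻¹ * y))
      rw [show B u (tw p K ((untw p K u)⁻¹ * y)) = lam0 (tw p K (untw p K u * ((untw p K u)⁻¹ * y))) from rfl] at this
      rwa [← mul_assoc, mul_inv_cancel₀ hne', one_mul] at this
    have := hz (untw p K (b i₀))
    rw [tw_untw, hlam0] at this
    exact one_ne_zero this
  let db := B.dualBasis hB b
  refine ⟨⟨Module.finrank K V, fun i => untw p K (b i), fun i => untw p K (db i),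
    fun x => lam0 (tw p K x), ?_, ?_, ?_, ?_, i₀⟩⟩
  · intro a c
    beta_reduce
    rw [tw_add]; exact map_add _ _ _
  · intro a x
    beta_reduce
    have : tw p K (a ^ p * x) = a • tw p K x := rfl
    rw [this, map_smul]; rfl
  · intro i j
    beta_reduce
    have h2 := B.apply_dualBasis_left hB b i j
    rw [show (B (db i)) (b j) = lam0 (tw p K (untw p K (db i) * untw p K (b j))) from rfl] at h2
    rw [h2]
    simp [eq_comm]
  · intro x
    have hrep : ∀ i, b.repr (tw p K x) i = lam0 (tw p K (untw p K (db i) * x)) := by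
      intro i
      have h1 : B (db i) (tw p K x) = lam0 (tw p K (untw p K (db i) * x)) := rfl
      rw [← h1]
      conv_rhs => rw [show (tw p K x) = ∑ j, b.repr (tw p K x) j • b j from (b.sum_repr _).symm]
      rw [map_sum]
      rw [Finset.sum_congr rfl (fun j _ => by
        rw [map_smul, smul_eq_mul, B.apply_dualBasis_left hB b i j])]
      simp
    have hx : tw p K x = ∑ i, b.repr (tw p K x) i • b i := (b.sum_repr _).symm
    calc x = untw p K (tw p K x) := rfl
      _ = untw p K (∑ i, b.repr (tw p K x) i • b i) := by rw [← hx]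
      _ = ∑ i, lam0 (tw p K (untw p K (db i) * x)) ^ p * untw p K (b i) := by
          rw [show (∑ i, b.repr (tw p K x) i • b i)
              = ∑ i, tw p K (lam0 (tw p K (untw p K (db i) * x)) ^ p * untw p K (b i)) from by
            refine Finset.sum_congr rfl fun i _ => ?_
            rw [← hrep i]; rfl]
          induction (Finset.univ : Finset (Fin (Module.finrank K V))) using Finset.induction with
          | empty => simp; rfl
          | insert _ _ h ih => rw [Finset.sum_insert h, Finset.sum_insert h, untw_add, ih]; rfl

end PRootDataAux



section Main

open MvPolynomial

theorem fedder_criterion_filtration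
    (K : Type*) [Field K] (p d : ℕ) (hp : p.Prime) [CharP K p]
    (hFF : IsFFiniteRing p K)
    (I : ℕ → Ideal (MvPolynomial (Fin d) K)) (hI : IsIdealFiltration I)
    (hhom : ∀ n, ∃ S : Set (MvPolynomial (Fin d) K),
      (∀ f ∈ S, ∃ k, f.IsHomogeneous k) ∧ I n = Ideal.span S) :
    IsFPureFiltration p I ↔
      ¬ ((⨅ n : ℕ, ((I (n + 1)).frobPow p).colon (I (n * p + 1))) ≤
          (Ideal.span (Set.range MvPolynomial.X)).frobPow p) := by
  haveI : Fact p.Prime := ⟨hp⟩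
  obtain ⟨D⟩ : Nonempty (PRootData p K) := PRootDataAux.exists_pRootData p K hFF
  set mX : Ideal (MvPolynomial (Fin d) K) := Ideal.span (Set.range X) with hmX
  constructor
  · rintro ⟨hfil, φ, ⟨hadd, hsemi, hone⟩, hmaps⟩ hle
    set f : MvPolynomial (Fin d) K :=
      ∑ b : Fin D.m × (Fin d → Fin p), (φ (D.eb b.1 b.2)) ^ p * D.mult b.1 b.2 with hf
    have hrep : ∀ x, D.Lam (f * x) = φ x := by
      intro x
      have h1 : f * x = ∑ b : Fin D.m × (Fin d → Fin p),
          (φ (D.eb b.1 b.2)) ^ p * (D.mult b.1 b.2 * x) := by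
        rw [hf, Finset.sum_mul]
        exact Finset.sum_congr rfl fun b _ => by ring
      rw [h1]
      rw [show D.Lam (∑ b : Fin D.m × (Fin d → Fin p),
          (φ (D.eb b.1 b.2)) ^ p * (D.mult b.1 b.2 * x))
        = ∑ b : Fin D.m × (Fin d → Fin p),
          D.Lam ((φ (D.eb b.1 b.2)) ^ p * (D.mult b.1 b.2 * x)) from
        map_sum (AddMonoidHom.mk' D.Lam D.Lam_add) _ _]
      have h2 : ∀ b : Fin D.m × (Fin d → Fin p),
          D.Lam ((φ (D.eb b.1 b.2)) ^ p * (D.mult b.1 b.2 * x))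
            = φ (D.eb b.1 b.2) * D.Cc b.1 b.2 x := by
        intro b
        rw [D.Lam_semi, ← D.Cc_eq_Lam]
      rw [Finset.sum_congr rfl fun b _ => h2 b]
      conv_rhs => rw [← D.expand_poly x]
      rw [show φ (∑ b : Fin D.m × (Fin d → Fin p), (D.Cc b.1 b.2 x) ^ p * D.eb b.1 b.2)
        = ∑ b : Fin D.m × (Fin d → Fin p), φ ((D.Cc b.1 b.2 x) ^ p * D.eb b.1 b.2) from
        map_sum (AddMonoidHom.mk' φ hadd) _ _]
      exact Finset.sum_congr rfl fun b _ => by rw [hsemi]; ring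
    have hfmem : f ∈ ⨅ n : ℕ, ((I (n + 1)).frobPow p).colon (I (n * p + 1)) := by
      rw [Ideal.mem_iInf]
      intro n
      rw [Submodule.mem_colon]
      intro x hx
      rw [smul_eq_mul]
      refine D.mem_frobPow_of_forall _ _ (fun i α => ?_)
      rw [D.Cc_eq_Lam]
      rw [show D.mult i α * (f * x) = f * (D.mult i α * x) from by ring, hrep]
      exact hmaps n _ (Ideal.mul_mem_left _ _ hx)
    have hnot : f ∉ mX.frobPow p := by
      intro hmem
      have hC := D.Cc_mem_of_mem_frobPow _ _ hmem D.i₀ (PRootData.omeg p)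
      have hC1 : D.Cc D.i₀ (PRootData.omeg p) f = 1 := by
        calc D.Cc D.i₀ (PRootData.omeg p) f = D.Lam (f * 1) := by rw [mul_one]; rfl
          _ = φ 1 := hrep 1
          _ = 1 := hone
      rw [hC1] at hC
      exact one_not_mem_spanX hC
    exact hnot (hle hfmem)
  · intro hnle
    obtain ⟨f₀, hf₀mem, hf₀not⟩ := SetLike.not_le_iff_exists.mp hnle
    have hHg : Hg (⨅ n : ℕ, ((I (n + 1)).frobPow p).colon (I (n * p + 1))) := by
      refine Hg_inf _ (fun n => ?_)
      obtain ⟨S1, hS1h, hS1⟩ := hhom (n + 1)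
      obtain ⟨S2, hS2h, hS2⟩ := hhom (n * p + 1)
      refine Hg_colon _ _ ?_ S2 hS2h hS2
      rw [hS1]
      exact Hg_frobPow p S1 hS1h
    have hcomp : ∃ k, (homogeneousComponent k f₀
          ∈ ⨅ n : ℕ, ((I (n + 1)).frobPow p).colon (I (n * p + 1)))
        ∧ homogeneousComponent k f₀ ∉ mX.frobPow p := by
      by_contra hall
      push_neg at hall
      apply hf₀not
      rw [← sum_homogeneousComponent f₀]
      exact Ideal.sum_mem _ fun k _ => hall k (hHg f₀ hf₀mem k)
    obtain ⟨k, hfmem, hfnot⟩ := hcomp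
    set f := homogeneousComponent k f₀ with hfdef
    have hfhom : f.IsHomogeneous k := homogeneousComponent_isHomogeneous k f₀
    have hex : ∃ (i : Fin D.m) (α : Fin d → Fin p), D.Cc i α f ∉ mX := by
      by_contra hall
      push_neg at hall
      exact hfnot (D.mem_frobPow_of_forall mX f hall)
    obtain ⟨i, α, hCnot⟩ := hex
    set h := D.Cc i α f with hh
    obtain ⟨t, ht⟩ := Cc_isHomogeneous D i α f k hfhom
    rcases Nat.eq_zero_or_pos t with ht0 | htpos
    swap
    · exact absurd (mem_spanX_of_coeff_zero h (homog_pos_coeff0 h t ht htpos)) hCnot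
    subst ht0
    have hCeq : h = C (coeff 0 h) := homog_zero_eq_C h ht
    set c₀ := coeff 0 h with hc₀def
    have hc₀ : c₀ ≠ 0 := by
      intro h0
      apply hCnot
      rw [hCeq, h0, map_zero]
      exact Submodule.zero_mem _
    set y := (C c₀⁻¹ : MvPolynomial (Fin d) K) ^ p * D.mult i α with hy
    have hy1 : D.Lam (y * f) = 1 := by
      rw [show y * f = (C c₀⁻¹ : MvPolynomial (Fin d) K) ^ p * (D.mult i α * f) from by
        rw [hy]; ring]
      rw [D.Lam_semi, ← D.Cc_eq_Lam, ← hh, hCeq, ← map_mul,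
        inv_mul_cancel₀ hc₀, map_one]
    refine ⟨hI, fun x => D.Lam (y * f * x), ⟨?_, ?_, ?_⟩, ?_⟩
    · intro a b
      beta_reduce
      rw [show y * f * (a + b) = y * f * a + y * f * b from by ring, D.Lam_add]
    · intro a b
      beta_reduce
      rw [show y * f * (a ^ p * b) = a ^ p * (y * f * b) from by ring, D.Lam_semi]
    · beta_reduce
      rw [mul_one]
      exact hy1
    · intro n x hx
      beta_reduce
      have hfc : f ∈ ((I (n + 1)).frobPow p).colon (I (n * p + 1)) :=
        Ideal.mem_iInf.mp hfmem n
      rw [Submodule.mem_colon] at hfc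
      have hfx : f * x ∈ (I (n + 1)).frobPow p := by
        have := hfc x hx
        rwa [smul_eq_mul] at this
      rw [show y * f * x = y * (f * x) from by ring]
      exact D.Lam_mul_mem _ _ _ hfx

end Main
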